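/- Let E be a Banach space and let φ, ψ ∈ E'. If ‖αφ + βψ‖ ≥ A·(|α|^p + |β|^p)^{1/p} for all scalars α, β, with 1 < p ≤ ∞ and A > 0, then there exists a sequence (x_m) in the unit ball of E with φ(x_m) → A and ψ(x_m) → 0. -/
import Mathlib


open scoped ENNReal NNReal
open Filter Topology

/-- The key separation step: a lower `ℓ_p` estimate for a pair `(φ, ψ)` in `E'`
yields a sequence in the unit ball on which `φ → A` and `ψ → 0`. -/
theorem exists_seq_of_lower_lp_estimate_pair
    {𝕜 : Type*} [RCLike 𝕜] {E : Type*} [NormedAddCommGroup E] [NormedSpace 𝕜 E]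
    [CompleteSpace E]
    (φ ψ : E →L[𝕜] 𝕜) (p : ℝ≥0∞) (hp : 1 < p) (A : ℝ) (hA : 0 < A)
    (hlb : ∀ α β : 𝕜,
      A * (if p = ⊤ then max ‖α‖ ‖β‖
        else (‖α‖ ^ p.toReal + ‖β‖ ^ p.toReal) ^ (p.toReal⁻¹)) ≤ ‖α • φ + β • ψ‖) :
    ∃ x : ℕ → E, (∀ m, ‖x m‖ ≤ 1) ∧
      Tendsto (fun m => φ (x m)) atTop (𝓝 (A : 𝕜)) ∧
      Tendsto (fun m => ψ (x m)) atTop (𝓝 0) := by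
  classical
  set L : E →L[𝕜] 𝕜 × 𝕜 := φ.prod ψ with hLdef
  set S : Set (𝕜 × 𝕜) := L '' Metric.closedBall 0 1 with hSdef
  -- S is convex
  have hconv : Convex ℝ S := by
    rintro _ ⟨x, hx, rfl⟩ _ ⟨y, hy, rfl⟩ s t hs ht hst
    rw [Metric.mem_closedBall, dist_zero_right] at hx hy
    refine ⟨((s : ℝ) : 𝕜) • x + ((t : ℝ) : 𝕜) • y, ?_, ?_⟩
    · rw [Metric.mem_closedBall, dist_zero_right]
      calc ‖((s : ℝ) : 𝕜) • x + ((t : ℝ) : 𝕜) • y‖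
          ≤ ‖((s : ℝ) : 𝕜) • x‖ + ‖((t : ℝ) : 𝕜) • y‖ := norm_add_le _ _
        _ ≤ s * 1 + t * 1 := by
            rw [norm_smul, norm_smul, RCLike.norm_ofReal, RCLike.norm_ofReal,
              abs_of_nonneg hs, abs_of_nonneg ht]
            gcongr
        _ = 1 := by linarith
    · rw [map_add, map_smul, map_smul]
      rw [← RCLike.algebraMap_eq_ofReal, algebraMap_smul, algebraMap_smul]
  -- The point ((A : 𝕜), 0) lies in the closure of S
  have hmem : (((A : ℝ) : 𝕜), (0 : 𝕜)) ∈ closure S := by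
    by_contra hnot
    obtain ⟨f, u, hfu, hux⟩ := RCLike.geometric_hahn_banach_closed_point (𝕜 := 𝕜)
      hconv.closure isClosed_closure hnot
    set c₁ : 𝕜 := f (1, 0) with hc₁
    set c₂ : 𝕜 := f (0, 1) with hc₂
    have hf : ∀ z : 𝕜 × 𝕜, f z = c₁ * z.1 + c₂ * z.2 := by
      intro z
      have hz : z = z.1 • ((1 : 𝕜), (0 : 𝕜)) + z.2 • ((0 : 𝕜), (1 : 𝕜)) := by
        simp [Prod.ext_iff]
      rw [hz, map_add, map_smul, map_smul, smul_eq_mul, smul_eq_mul, ← hc₁, ← hc₂]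
      simp [mul_comm]
    set F : E →L[𝕜] 𝕜 := c₁ • φ + c₂ • ψ with hFdef
    have hFL : ∀ x : E, F x = f (L x) := by
      intro x
      rw [hf]
      simp [hFdef, hLdef, smul_eq_mul]
    have hFlt : ∀ x : E, ‖x‖ ≤ 1 → RCLike.re (F x) < u := by
      intro x hx
      rw [hFL]
      exact hfu (L x) (subset_closure ⟨x, by simpa [Metric.mem_closedBall, dist_zero_right], rfl⟩)
    have hu0 : 0 < u := by
      have := hFlt 0 (by simp)
      simpa using this
    -- bound the operator norm of F by u
    have hball : ∀ y : E, ‖y‖ ≤ 1 → ‖F y‖ ≤ u := by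
      intro y hy
      rcases eq_or_ne (F y) 0 with h0 | h0
      · rw [h0, norm_zero]; exact hu0.le
      · set θ : 𝕜 := ((‖F y‖ : ℝ) : 𝕜) / F y with hθdef
        have hθ : ‖θ‖ = 1 := by
          rw [hθdef, norm_div, RCLike.norm_ofReal, abs_of_nonneg (norm_nonneg _)]
          exact div_self (norm_ne_zero_iff.mpr h0)
        have hFθ : F (θ • y) = ((‖F y‖ : ℝ) : 𝕜) := by
          rw [map_smul, smul_eq_mul, hθdef, div_mul_cancel₀ _ h0]
        have := hFlt (θ • y) (by rw [norm_smul, hθ, one_mul]; exact hy)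
        rw [hFθ, RCLike.ofReal_re] at this
        exact this.le
    have hnorm : ‖F‖ ≤ u := by
      refine F.opNorm_le_bound' hu0.le fun x hx0 => ?_
      set y : E := ((‖x‖⁻¹ : ℝ) : 𝕜) • x with hydef
      have hy1 : ‖y‖ ≤ 1 := by
        rw [hydef, norm_smul, RCLike.norm_ofReal, abs_of_nonneg (by positivity),
          inv_mul_cancel₀ hx0]
      have hFy : ‖F y‖ = ‖x‖⁻¹ * ‖F x‖ := by
        rw [hydef, map_smul, norm_smul, RCLike.norm_ofReal, abs_of_nonneg (by positivity)]
      have := hball y hy1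
      rw [hFy] at this
      have hxpos : 0 < ‖x‖ := lt_of_le_of_ne (norm_nonneg x) (Ne.symm hx0)
      calc ‖F x‖ = ‖x‖ * (‖x‖⁻¹ * ‖F x‖) := by field_simp
        _ ≤ ‖x‖ * u := by gcongr
        _ = u * ‖x‖ := mul_comm _ _
    -- the other side of the separation
    have hre : u < A * RCLike.re c₁ := by
      have h := hux
      rw [hf] at h
      simpa [RCLike.mul_re, mul_comm] using h
    -- ‖c₁‖ is at most the ℓ_p expression
    have hle : ‖c₁‖ ≤ (if p = ⊤ then max ‖c₁‖ ‖c₂‖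
        else (‖c₁‖ ^ p.toReal + ‖c₂‖ ^ p.toReal) ^ (p.toReal⁻¹)) := by
      split_ifs with htop
      · exact le_max_left _ _
      · have hpt : 0 < p.toReal :=
          ENNReal.toReal_pos (fun h => by simp [h] at hp) htop
        calc ‖c₁‖ = (‖c₁‖ ^ p.toReal) ^ p.toReal⁻¹ :=
              (Real.rpow_rpow_inv (norm_nonneg _) hpt.ne').symm
          _ ≤ (‖c₁‖ ^ p.toReal + ‖c₂‖ ^ p.toReal) ^ p.toReal⁻¹ := by
              apply Real.rpow_le_rpow (Real.rpow_nonneg (norm_nonneg _) _)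
                (le_add_of_nonneg_right (Real.rpow_nonneg (norm_nonneg _) _))
                (by positivity)
    have hcontr := (hlb c₁ c₂).trans hnorm
    have h2 : A * RCLike.re c₁ ≤ u :=
      le_trans (mul_le_mul_of_nonneg_left ((RCLike.re_le_norm c₁).trans hle) hA.le) hcontr
    linarith
  -- extract the sequence
  obtain ⟨y, hyS, hy⟩ := mem_closure_iff_seq_limit.mp hmem
  choose x hx hLx using fun n => hyS n
  refine ⟨x, fun m => by simpa [Metric.mem_closedBall, dist_zero_right] using hx m, ?_, ?_⟩
  · have h1 : Tendsto (fun m => (y m).1) atTop (𝓝 ((A : ℝ) : 𝕜)) :=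
      (continuous_fst.tendsto _).comp hy
    refine h1.congr fun m => ?_
    rw [← hLx m, hLdef]
    simp
  · have h2 : Tendsto (fun m => (y m).2) atTop (𝓝 (0 : 𝕜)) :=
      (continuous_snd.tendsto _).comp hy
    refine h2.congr fun m => ?_
    rw [← hLx m, hLdef]
    simp
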